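/- For real numbers (h_{ij})_{1≤i,j≤3} forming a symmetric 3×3 matrix h and a symmetric 3×3 matrix Ric with trace R, the quantity |h|²|Ric|² − 2R·tr(h)·⟨Ric,h⟩ + 2R⟨Ric, h²⟩ + (R²/2)((tr h)² − |h|²) is nonnegative, where ⟨·,·⟩ is the Frobenius inner product and h² is the matrix square. -/

import Mathlib

open Finset Matrix

set_option maxHeartbeats 1000000


/-- discriminant-style nonnegativity: `e1² e2² − e2³ − 2 e1³ e3 ≥ 0` for reals. -/
lemma gnn (u v w : ℝ) :
    0 ≤ (u+v+w)^2*(u*v+u*w+v*w)^2 - (u*v+u*w+v*w)^3 - 2*(u+v+w)^3*(u*v*w) := by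
  set t : ℝ := (u+v+w)/3 with ht
  set S : ℝ := (u-t)^2+(v-t)^2+(w-t)^2 with hS
  set P : ℝ := (u-t)*(v-t)*(w-t) with hP
  have hS0 : 0 ≤ S := by rw [hS]; positivity
  have hdisc : S^3 - 54*P^2 = 2*((u-v)*(v-w)*(u-w))^2 := by
    rw [hS, hP, ht]; ring
  have hL : 0 ≤ 108*t^4*S + S^3 := by positivity
  have r1 : 0 ≤ 3456*t^6*(S^3 - 54*P^2) := by
    rw [hdisc]; positivity
  have r2 : 0 ≤ S^2*(S-6*t^2)^2*((S+6*t^2)^2+288*t^4) := by positivity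
  have hkey : (108*t^4*S + S^3)^2 - (432*t^3*P)^2
      = 3456*t^6*(S^3 - 54*P^2) + S^2*(S-6*t^2)^2*((S+6*t^2)^2+288*t^4) := by ring
  have h1 : (432*t^3*P)^2 ≤ (108*t^4*S + S^3)^2 := by linarith
  have h2 : 432*t^3*P ≤ 108*t^4*S + S^3 := (abs_le_of_sq_le_sq' h1 hL).2
  have hfin : (u+v+w)^2*(u*v+u*w+v*w)^2 - (u*v+u*w+v*w)^3 - 2*(u+v+w)^3*(u*v*w)
      = (108*t^4*S + S^3 - 432*t^3*P)/8 := by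
    rw [hS, hP, ht]; ring
  clear_value t S P
  rw [hfin]; linarith

lemma quad_nn (A B C y z : ℝ) (hA : 0 ≤ A) (hC : 0 ≤ C) (hD : B^2 ≤ A*C) :
    0 ≤ A*y^2 + 2*B*(y*z) + C*z^2 := by
  rcases hA.eq_or_lt with hz|hpos
  · have hB : B = 0 := by nlinarith
    rw [hB, ← hz]
    nlinarith [mul_nonneg hC (sq_nonneg z)]
  · nlinarith [sq_nonneg (A*y + B*z), mul_nonneg (sub_nonneg.mpr hD) (sq_nonneg z), hpos]

lemma Q1nn (a b c x y z : ℝ) :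
    0 ≤ (a^2+b^2+c^2)*(x^2+y^2+z^2) + (c^2-(a+b)^2)*(x*y)
      + (b^2-(a+c)^2)*(x*z) + (a^2-(b+c)^2)*(y*z) := by
  set s : ℝ := a^2+b^2+c^2 with hs
  set u : ℝ := (c^2-(a+b)^2)/2 with hu
  set v : ℝ := (b^2-(a+c)^2)/2 with hv
  set w : ℝ := (a^2-(b+c)^2)/2 with hw
  have hs0 : 0 ≤ s := by rw [hs]; positivity
  have hsu : 0 ≤ s + u := by rw [hs, hu]; nlinarith [sq_nonneg (a-b), sq_nonneg c]
  have hsu' : 0 ≤ s - u := by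
    rw [hs, hu]; nlinarith [sq_nonneg (a+b), sq_nonneg a, sq_nonneg b, sq_nonneg c]
  have hsv : 0 ≤ s + v := by rw [hs, hv]; nlinarith [sq_nonneg (a-c), sq_nonneg b]
  have hsv' : 0 ≤ s - v := by
    rw [hs, hv]; nlinarith [sq_nonneg (a+c), sq_nonneg a, sq_nonneg b, sq_nonneg c]
  have hdet : 0 ≤ s^3 - s*(u^2+v^2+w^2) + 2*(u*v*w) := by
    have hg := gnn ((b+c-a)/2) ((a+c-b)/2) ((a+b-c)/2)
    have hid : s^3 - s*(u^2+v^2+w^2) + 2*(u*v*w)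
        = 8*(((b+c-a)/2+(a+c-b)/2+(a+b-c)/2)^2
              *(((b+c-a)/2)*((a+c-b)/2)+((b+c-a)/2)*((a+b-c)/2)+((a+c-b)/2)*((a+b-c)/2))^2
            - (((b+c-a)/2)*((a+c-b)/2)+((b+c-a)/2)*((a+b-c)/2)+((a+c-b)/2)*((a+b-c)/2))^3
            - 2*((b+c-a)/2+(a+c-b)/2+(a+b-c)/2)^3
              *(((b+c-a)/2)*((a+c-b)/2)*((a+b-c)/2))) := by
      rw [hs, hu, hv, hw]; ring
    rw [hid]; linarith [hg]
  have hzero : s = 0 → u = 0 ∧ v = 0 ∧ w = 0 := by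
    intro h0
    have ha2 : a^2 = 0 := by rw [hs] at h0; nlinarith [sq_nonneg a, sq_nonneg b, sq_nonneg c]
    have hb2 : b^2 = 0 := by rw [hs] at h0; nlinarith [sq_nonneg a, sq_nonneg b, sq_nonneg c]
    have hc2 : c^2 = 0 := by rw [hs] at h0; nlinarith [sq_nonneg a, sq_nonneg b, sq_nonneg c]
    have ha : a = 0 := by nlinarith [sq_nonneg a]
    have hb : b = 0 := by nlinarith [sq_nonneg b]
    have hc : c = 0 := by nlinarith [sq_nonneg c]
    rw [hu, hv, hw, ha, hb, hc]; norm_num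
  have hgoal : (a^2+b^2+c^2)*(x^2+y^2+z^2) + (c^2-(a+b)^2)*(x*y)
      + (b^2-(a+c)^2)*(x*z) + (a^2-(b+c)^2)*(y*z)
      = s*(x^2+y^2+z^2) + 2*u*(x*y) + 2*v*(x*z) + 2*w*(y*z) := by
    rw [hs, hu, hv, hw]; ring
  rw [hgoal]
  clear_value s u v w
  rcases hs0.eq_or_lt with h0|hpos
  · obtain ⟨hu0, hv0, hw0⟩ := hzero h0.symm
    rw [← h0, hu0, hv0, hw0]; ring_nf; norm_num
  · have hA : 0 ≤ s^2 - u^2 := by nlinarith [mul_nonneg hsu hsu']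
    have hC : 0 ≤ s^2 - v^2 := by nlinarith [mul_nonneg hsv hsv']
    have hACB : (s*w-u*v)^2 ≤ (s^2-u^2)*(s^2-v^2) := by
      nlinarith [mul_nonneg hs0 hdet]
    have hq := quad_nn (s^2-u^2) (s*w-u*v) (s^2-v^2) y z hA hC hACB
    have hsQ : s*(s*(x^2+y^2+z^2) + 2*u*(x*y) + 2*v*(x*z) + 2*w*(y*z))
        = (s*x+u*y+v*z)^2 + ((s^2-u^2)*y^2 + 2*(s*w-u*v)*(y*z) + (s^2-v^2)*z^2) := by
      ring
    nlinarith [sq_nonneg (s*x+u*y+v*z), hq, hpos, hsQ]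

lemma coreQ (a b c x y z p q r : ℝ) :
    0 ≤ (a^2+b^2+c^2)*(x^2+y^2+z^2) + (c^2-(a+b)^2)*(x*y)
      + (b^2-(a+c)^2)*(x*z) + (a^2-(b+c)^2)*(y*z)
      + p^2*(a^2+3*b^2+3*c^2+2*b*c) + q^2*(3*a^2+b^2+3*c^2+2*a*c)
      + r^2*(3*a^2+3*b^2+c^2+2*a*b) := by
  have h1 := Q1nn a b c x y z
  have hp : 0 ≤ p^2*(a^2+3*b^2+3*c^2+2*b*c) := by
    nlinarith [mul_nonneg (sq_nonneg p) (sq_nonneg a), mul_nonneg (sq_nonneg p) (sq_nonneg (b+c)),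
      mul_nonneg (sq_nonneg p) (sq_nonneg b), mul_nonneg (sq_nonneg p) (sq_nonneg c)]
  have hq : 0 ≤ q^2*(3*a^2+b^2+3*c^2+2*a*c) := by
    nlinarith [mul_nonneg (sq_nonneg q) (sq_nonneg b), mul_nonneg (sq_nonneg q) (sq_nonneg (a+c)),
      mul_nonneg (sq_nonneg q) (sq_nonneg a), mul_nonneg (sq_nonneg q) (sq_nonneg c)]
  have hr : 0 ≤ r^2*(3*a^2+3*b^2+c^2+2*a*b) := by
    nlinarith [mul_nonneg (sq_nonneg r) (sq_nonneg c), mul_nonneg (sq_nonneg r) (sq_nonneg (a+b)),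
      mul_nonneg (sq_nonneg r) (sq_nonneg a), mul_nonneg (sq_nonneg r) (sq_nonneg b)]
  linarith

/-- Anderson–Chow algebraic inequality in dimension 3: for
symmetric 3×3 real matrices `h` and `Ric` with `R = tr Ric`,
`|h|²|Ric|² − 2R (tr h) ⟨Ric,h⟩ + 2R ⟨Ric,h²⟩ + (R²/2)((tr h)² − |h|²) ≥ 0`,
where `⟨·,·⟩` is the Frobenius inner product. -/
theorem stmt9 (h Ric : Matrix (Fin 3) (Fin 3) ℝ)
    (hsymm : h.IsSymm) (hRsymm : Ric.IsSymm) :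
    0 ≤ (∑ i, ∑ j, (h i j) ^ 2) * (∑ i, ∑ j, (Ric i j) ^ 2)
      - 2 * Ric.trace * h.trace * (∑ i, ∑ j, Ric i j * h i j)
      + 2 * Ric.trace * (∑ i, ∑ j, Ric i j * (h * h) i j)
      + Ric.trace ^ 2 / 2 * (h.trace ^ 2 - ∑ i, ∑ j, (h i j) ^ 2) := by
  have hhs : (h * h).IsSymm := by
    rw [Matrix.IsSymm, Matrix.transpose_mul, hsymm]
  have frob : ∀ (A B : Matrix (Fin 3) (Fin 3) ℝ), B.IsSymm →
      ∑ i, ∑ j, A i j * B i j = (A * B).trace := by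
    intro A B hB
    simp only [Matrix.trace, Matrix.diag, Matrix.mul_apply]
    exact Finset.sum_congr rfl fun i _ => Finset.sum_congr rfl fun j _ => by rw [hB.apply]
  have s1 : ∑ i, ∑ j, (h i j) ^ 2 = (h * h).trace := by
    rw [← frob h h hsymm]
    exact Finset.sum_congr rfl fun i _ => Finset.sum_congr rfl fun j _ => (sq _)
  have s2 : ∑ i, ∑ j, (Ric i j) ^ 2 = (Ric * Ric).trace := by
    rw [← frob Ric Ric hRsymm]
    exact Finset.sum_congr rfl fun i _ => Finset.sum_congr rfl fun j _ => (sq _)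
  have s3 : ∑ i, ∑ j, Ric i j * h i j = (Ric * h).trace := frob Ric h hsymm
  have s4 : ∑ i, ∑ j, Ric i j * (h * h) i j = (Ric * (h * h)).trace := frob Ric (h * h) hhs
  rw [s1, s2, s3, s4]
  -- spectral decomposition
  have hR' : Ric.IsHermitian := by
    rw [Matrix.IsHermitian, Matrix.conjTranspose_eq_transpose_of_trivial]; exact hRsymm
  set U : Matrix (Fin 3) (Fin 3) ℝ := (hR'.eigenvectorUnitary : Matrix (Fin 3) (Fin 3) ℝ) with hUdef
  set D : Matrix (Fin 3) (Fin 3) ℝ := Matrix.diagonal hR'.eigenvalues with hDdef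
  have hspec : Ric = U * D * star U := by
    have := hR'.spectral_theorem
    simpa [hUdef, hDdef] using this
  have hU1 : U * star U = 1 := mem_unitaryGroup_iff.mp hR'.eigenvectorUnitary.2
  have hU2 : star U * U = 1 := mem_unitaryGroup_iff'.mp hR'.eigenvectorUnitary.2
  have hUc : ∀ X : Matrix (Fin 3) (Fin 3) ℝ, U * (star U * X) = X := fun X => by
    rw [← Matrix.mul_assoc, hU1, Matrix.one_mul]
  have hUc' : ∀ X : Matrix (Fin 3) (Fin 3) ℝ, star U * (U * X) = X := fun X => by
    rw [← Matrix.mul_assoc, hU2, Matrix.one_mul]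
  set g : Matrix (Fin 3) (Fin 3) ℝ := star U * h * U with hgdef
  have hgs : g.IsSymm := by
    have hsU : star U = Uᵀ := by
      rw [Matrix.star_eq_conjTranspose, Matrix.conjTranspose_eq_transpose_of_trivial]
    rw [hgdef, Matrix.IsSymm, Matrix.transpose_mul, Matrix.transpose_mul, hsymm, hsU,
      Matrix.transpose_transpose, Matrix.mul_assoc]
  -- trace identities
  have t1 : (h * h).trace = (g * g).trace := by
    have e : g * g = star U * (h * (h * U)) := by
      rw [hgdef]; simp only [Matrix.mul_assoc, hUc]
    rw [e, Matrix.trace_mul_comm (star U) (h * (h * U))]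
    simp only [Matrix.mul_assoc, hU1, Matrix.mul_one]
  have t2 : (Ric * Ric).trace = (D * D).trace := by
    rw [hspec]
    have e : U * D * star U * (U * D * star U) = U * (D * (D * star U)) := by
      simp only [Matrix.mul_assoc, hUc']
    rw [e, Matrix.trace_mul_comm]
    simp only [Matrix.mul_assoc, hU2, Matrix.mul_one]
  have t3 : (Ric * h).trace = (D * g).trace := by
    rw [hspec]
    have e : U * D * star U * h = U * (D * (star U * h)) := by
      simp only [Matrix.mul_assoc]
    rw [e, Matrix.trace_mul_comm, hgdef]
    simp only [Matrix.mul_assoc]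
  have t4 : (Ric * (h * h)).trace = (D * (g * g)).trace := by
    have m4 : (U * D * star U) * (h * h) = U * ((D * (g * g)) * star U) := by
      rw [hgdef]
      simp only [Matrix.mul_assoc, hUc, hUc', hU1, hU2, Matrix.mul_one, Matrix.one_mul]
    rw [hspec, m4, Matrix.trace_mul_comm]
    simp only [Matrix.mul_assoc, hU2, Matrix.mul_one]
  have t5 : Ric.trace = D.trace := by
    rw [hspec, Matrix.trace_mul_comm]
    simp only [Matrix.mul_assoc, hUc', hU2, Matrix.mul_one]
  have t6 : h.trace = g.trace := by
    rw [hgdef, Matrix.trace_mul_comm]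
    simp only [Matrix.mul_assoc, hUc, hU1, Matrix.mul_one]
  rw [t1, t2, t3, t4, t5, t6]
  clear_value g D
  -- expand and finish
  have h01 : g 1 0 = g 0 1 := hgs.apply 0 1
  have h02 : g 2 0 = g 0 2 := hgs.apply 0 2
  have h12 : g 2 1 = g 1 2 := hgs.apply 1 2
  have key := coreQ (D 0 0) (D 1 1) (D 2 2) (g 0 0) (g 1 1) (g 2 2) (g 1 2) (g 0 2) (g 0 1)
  have hD01 : D 0 1 = 0 := by rw [hDdef]; simp [Matrix.diagonal]
  have hD02 : D 0 2 = 0 := by rw [hDdef]; simp [Matrix.diagonal]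
  have hD10 : D 1 0 = 0 := by rw [hDdef]; simp [Matrix.diagonal]
  have hD12 : D 1 2 = 0 := by rw [hDdef]; simp [Matrix.diagonal]
  have hD20 : D 2 0 = 0 := by rw [hDdef]; simp [Matrix.diagonal]
  have hD21 : D 2 1 = 0 := by rw [hDdef]; simp [Matrix.diagonal]
  simp only [Matrix.trace, Matrix.diag, Matrix.mul_apply, Fin.sum_univ_three]
  rw [h01, h02, h12, hD01, hD02, hD10, hD12, hD20, hD21]
  ring_nf
  ring_nf at key
  linarith [key]
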